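/- Let 𝒯 be a supercritical CA, let u be a unit vector, and let x_u ∈ ℓ_u ∩ 𝒩 be a point such that every line ℓ obtained from ℓ_u by a rotation about x_u through a nonzero angle of absolute value less than some α > 0 satisfies π_d(ℒ°(ℓ)) = 0. Then there is β > 0 such that for every unit vector v with ‖v − u‖ < β, the concave wedge Q = H_u⁻ ∪ H_v⁻ satisfies 𝒯̄(Q) ⊆ −x_u + Q. If moreover there exist δ > 0 and a line ℓ₀ such that (frontier of K_{1/w}) ∩ B(u/w(u), δ) = ℓ₀ ∩ B(u/w(u), δ) (i.e., the boundary of K_{1/w} is locally a line at u/w(u)) and x_u is the unique point with the above rotation property, then Q is invariant: 𝒯̄(Q) = −x_u + Q for v close enough to u. -/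

import Mathlib

open MeasureTheory ProbabilityTheory Filter Topology Set
open scoped Pointwise ENNReal

noncomputable section

abbrev Pt : Type := EuclideanSpace ℝ (Fin 2)

def mkPt (a b : ℝ) : Pt := (WithLp.equiv 2 (Fin 2 → ℝ)).symm ![a, b]

def toPt (z : ℤ × ℤ) : Pt := mkPt z.1 z.2

def lattice : Set Pt := Set.range toPt

structure CA where
  N : Set Pt
  finite : N.Finite
  subLat : N ⊆ lattice
  zeroMem : (0 : Pt) ∈ N
  negN : -N = N
  rule : Set Pt → Prop
  mono : ∀ ⦃S₁ S₂ : Set Pt⦄, S₁ ⊆ S₂ → rule S₁ → rule S₂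
  notEmpty : ¬ rule ∅
  ruleSymm : ∀ S : Set Pt, rule (-S) ↔ rule S
  solid : ∀ S : Set Pt, (0 : Pt) ∈ S → rule S

def CA.T (c : CA) (A : Set Pt) : Set Pt :=
  {x | x ∈ lattice ∧ c.rule (((fun a => a - x) '' A) ∩ c.N)}

def CA.Tbar (c : CA) (B : Set Pt) : Set Pt :=
  {x | c.rule ((((fun a => a - x) '' B) ∩ lattice) ∩ c.N)}

def Hminus (u : Pt) : Set Pt := {x | (inner ℝ x u : ℝ) ≤ 0}

def shiftSet (v : Pt) (S : Set Pt) : Set Pt := (fun x => x + v) '' S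

def IsSpeed (c : CA) (w : Pt → ℝ) : Prop :=
  ∀ u : Pt, ‖u‖ = 1 → c.Tbar (Hminus u) = shiftSet (w u • u) (Hminus u)

def Supercritical (w : Pt → ℝ) : Prop := ∀ u : Pt, ‖u‖ = 1 → 0 < w u

def FillsSpace (c : CA) (A : Set Pt) : Prop :=
  A ⊆ lattice ∧ ∀ x ∈ lattice, ∃ t : ℕ, x ∈ c.T^[t] A

def LocallyRegular (c : CA) : Prop :=
  ∀ A₀ : Set Pt, A₀.Finite → A₀ ⊆ lattice → ∃ C : ℝ, 0 < C ∧
    ∀ A : ℕ → Set Pt, A 0 = A₀ →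
      (∀ s, A s ⊆ A (s + 1)) → (∀ s, A (s + 1) ⊆ A s ∪ c.T (A s)) →
      ∀ t : ℕ, ∀ x ∈ A t, (∀ y ∈ A₀, C ≤ dist x y) →
        ∃ G : Set Pt, G.Finite ∧ G ⊆ A t ∧ G ⊆ Metric.closedBall x C ∧ FillsSpace c G

structure Perturbation (c : CA) where
  pr : Set Pt → ℝ
  nonneg : ∀ S, 0 ≤ pr S
  le_one : ∀ S, pr S ≤ 1
  mono : ∀ ⦃S₁ S₂ : Set Pt⦄, S₁ ⊆ S₂ → pr S₁ ≤ pr S₂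
  empty : pr ∅ = 0
  prSymm : ∀ S, pr (-S) = pr S
  solid : ∀ S : Set Pt, (0 : Pt) ∈ S → pr S = 1
  p : ℝ
  p_pos : 0 < p
  p_min : ∀ S : Set Pt, S ⊆ c.N → 0 < pr S → p ≤ pr S
  p_attained : ∃ S : Set Pt, S ⊆ c.N ∧ pr S = p
  compat : ∀ S : Set Pt, S ⊆ c.N → (c.rule S ↔ 0 < pr S)

def IsUniformIID {Ω : Type*} [MeasureSpace Ω] (U : ((ℤ × ℤ) × ℕ) → Ω → ℝ) : Prop :=
  (∀ i, Measurable (U i)) ∧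
  iIndepFun U ℙ ∧
  ∀ i, Measure.map (U i) ℙ = volume.restrict (Set.Icc (0 : ℝ) 1)

def IsDyn {Ω : Type*} (c : CA) (P : Perturbation c) (U : ((ℤ × ℤ) × ℕ) → Ω → ℝ)
    (A : ℕ → Ω → Set Pt) : Prop :=
  ∀ ω t, A (t + 1) ω =
    {x | ∃ z : ℤ × ℤ, toPt z = x ∧
      U (z, t) ω ≤ P.pr (((fun a => a - x) '' A t ω) ∩ c.N)}

def IsStdDyn {Ω : Type*} (c : CA) (p : ℝ) (U : ((ℤ × ℤ) × ℕ) → Ω → ℝ)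
    (A : ℕ → Ω → Set Pt) : Prop :=
  ∀ ω t, A (t + 1) ω =
    A t ω ∪ {x | x ∈ c.T (A t ω) ∧ ∃ z : ℤ × ℤ, toPt z = x ∧ U (z, t) ω ≤ p}

def SpeedEvent (u : Pt) (wu ε : ℝ) (t : ℕ) (At : Set Pt) : Prop :=
  shiftSet (((t : ℝ) * (wu - ε)) • u) (Hminus u) ∩ lattice ∩
      Metric.closedBall 0 ((t : ℝ) ^ 2) ⊆ At ∧
  At ∩ Metric.closedBall 0 ((t : ℝ) ^ 2) ⊆
      shiftSet (((t : ℝ) * (wu + ε)) • u) (Hminus u)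

def Lset (w : Pt → ℝ) : Set Pt := {x | ∀ u : Pt, ‖u‖ = 1 → (inner ℝ x u : ℝ) ≤ w u}

def Kset (w : Pt → ℝ) : Set Pt :=
  {x | ∃ u : Pt, ‖u‖ = 1 ∧ ∃ r : ℝ, 0 ≤ r ∧ r ≤ (w u)⁻¹ ∧ x = r • u}

def dKp (w : Pt → ℝ) : Set Pt :=
  frontier (Kset w) ∩ frontier (convexHull ℝ (Kset w))

def lineu (w : Pt → ℝ) (u : Pt) : Set Pt := {x | (inner ℝ x u : ℝ) = -(w u)}

def rot (β : ℝ) (v : Pt) : Pt :=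
  mkPt (Real.cos β * v 0 - Real.sin β * v 1) (Real.sin β * v 0 + Real.cos β * v 1)

def lineSet (q n : Pt) : Set Pt := {x | (inner ℝ (x - q) n : ℝ) = 0}

def farOpen (Nset : Set Pt) (q n : Pt) : Set Pt :=
  {x ∈ Nset | 0 < (inner ℝ (x - q) n : ℝ) * (inner ℝ q n : ℝ)}

def farClosed (Nset : Set Pt) (q n : Pt) : Set Pt :=
  {x ∈ Nset | 0 ≤ (inner ℝ (x - q) n : ℝ) * (inner ℝ q n : ℝ)}

def HasLDSpeed (c : CA) (P : Perturbation c) (wpi : Pt → ℝ) : Prop :=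
  ∀ u : Pt, ‖u‖ = 1 → 0 < wpi u ∧
    ∀ (Ω : Type) [MeasureSpace Ω] [IsProbabilityMeasure (ℙ : Measure Ω)]
      (U : ((ℤ × ℤ) × ℕ) → Ω → ℝ), IsUniformIID U →
      ∀ A : ℕ → Ω → Set Pt, IsDyn c P U A → A 0 = (fun _ => Hminus u ∩ lattice) →
      ∀ ε : ℝ, 0 < ε → ∃ cε : ℝ, 0 < cε ∧ ∀ t : ℕ, 1 ≤ t →
        ENNReal.ofReal (1 - Real.exp (-cε * t)) ≤ ℙ {ω | SpeedEvent u (wpi u) ε t (A t ω)}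

def ext (M : ℤ) (κ : ℝ) (A : Set (ℤ × ℤ)) : Set (ℤ × ℤ) :=
  {q | (0 ≤ q.1 ∧ q.1 ≤ M - 1 ∧ q ∈ A) ∨
       (M ≤ q.1 ∧ q.1 ≤ 2 * M - 1 ∧ (q.1 - M, ⌊(q.2 : ℝ) - κ * M⌋) ∈ A) ∨
       (-M ≤ q.1 ∧ q.1 < 0 ∧ (q.1 + M, ⌊(q.2 : ℝ) + κ * M⌋) ∈ A)}

def IsStripDyn {Ω : Type*} (c : CA) (P : Perturbation c) (M : ℤ) (κ : ℝ)
    (U : ((ℤ × ℤ) × ℕ) → Ω → ℝ) (A : ℕ → Ω → Set (ℤ × ℤ)) : Prop :=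
  ∀ ω t, A (t + 1) ω =
    {q | 0 ≤ q.1 ∧ q.1 ≤ M - 1 ∧
      U (q, t) ω ≤ P.pr ((toPt '' ((fun r => r - q) '' ext M κ (A t ω))) ∩ c.N)}

def hgt1 (A : Set (ℤ × ℤ)) (M : ℤ) (κ : ℝ) : ℝ :=
  sSup {r : ℝ | ∃ q ∈ A, 0 ≤ q.1 ∧ q.1 ≤ M - 1 ∧ r = κ * q.1 + q.2}

def hgt0 (A : Set (ℤ × ℤ)) (M : ℤ) (κ : ℝ) : ℝ :=
  sInf {r : ℝ | ∃ q : ℤ × ℤ, q ∉ A ∧ 0 ≤ q.1 ∧ q.1 ≤ M - 1 ∧ r = κ * q.1 + q.2}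

def boxN (ρ : ℕ) : Finset (ℤ × ℤ) := Finset.Icc (-(ρ : ℤ), -(ρ : ℤ)) ((ρ : ℤ), (ρ : ℤ))

def cutCard (ρ : ℕ) (a b cc : ℝ) : ℕ :=
  ((boxN ρ).filter (fun y => cc ≤ a * y.1 + b * y.2)).card

def lamSet (ρ : ℕ) (x : ℤ × ℤ) : Set ℕ :=
  {n | ∃ a b cc : ℝ, ¬(a = 0 ∧ b = 0) ∧ 0 < cc ∧ a * x.1 + b * x.2 = cc ∧ n = cutCard ρ a b cc}

def lamStar (ρ : ℕ) (x : ℤ × ℤ) : ℕ := sInf (lamSet ρ x)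

open scoped Classical in
def IsSlowSurface {Ω : Type*} (b : ℤ × ℕ → Ω → Bool) (η : ℕ → Ω → ℤ → ℕ) : Prop :=
  (∀ ω x, η 0 ω x = 0) ∧
  ∀ ω t x, η (t + 1) ω x =
    if b (x, t) ω = true ∧ ∀ y : ℤ, |y - x| ≤ 1 → η t ω x ≤ η t ω y
    then η t ω x + 1 else η t ω x

open scoped Classical in
def IsFastSurface {Ω : Type*} (b : ℤ × ℕ → Ω → Bool) (η : ℕ → Ω → ℤ → ℕ) : Prop :=
  (∀ ω x, η 0 ω x = 0) ∧
  ∀ ω t x, η (t + 1) ω x =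
    if b (x, t) ω = true ∨ ∃ y : ℤ, |y - x| ≤ 1 ∧ η t ω x < η t ω y
    then η t ω x + 1 else η t ω x

def AdmissibleField {Ω : Type*} [MeasureSpace Ω] (p' : ℝ) (r : ℕ)
    (b : ℤ × ℕ → Ω → Bool) : Prop :=
  (∀ i, Measurable (b i)) ∧
  (∀ i, ℙ {ω | b i ω = true} = ENNReal.ofReal p') ∧
  ∀ I : Finset (ℤ × ℕ),
    (∀ i ∈ I, ∀ j ∈ I, i ≠ j → i.2 ≠ j.2 ∨ (r : ℤ) < |i.1 - j.1|) →
    iIndepFun (fun i : I => b i.1) ℙ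


open Real Set
section
-- basic coordinate lemmas
lemma Pt.ext2 {x y : Pt} (h0 : x 0 = y 0) (h1 : x 1 = y 1) : x = y := by
  apply WithLp.ofLp_injective 2; funext i; fin_cases i <;> assumption

lemma inner_pt (x y : Pt) : (inner ℝ x y : ℝ) = x 0 * y 0 + x 1 * y 1 := by
  simp [PiLp.inner_apply, Fin.sum_univ_two, mul_comm]

lemma norm_sq_pt (x : Pt) : ‖x‖ ^ 2 = x 0 ^ 2 + x 1 ^ 2 := by
  rw [← real_inner_self_eq_norm_sq, inner_pt]; ring

lemma mkPt_apply0 (a b : ℝ) : (mkPt a b) 0 = a := rfl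
lemma mkPt_apply1 (a b : ℝ) : (mkPt a b) 1 = b := rfl

lemma rot_apply0 (β : ℝ) (v : Pt) : (rot β v) 0 = Real.cos β * v 0 - Real.sin β * v 1 := rfl
lemma rot_apply1 (β : ℝ) (v : Pt) : (rot β v) 1 = Real.sin β * v 0 + Real.cos β * v 1 := rfl

lemma pt_add_apply (x y : Pt) (i : Fin 2) : (x + y) i = x i + y i := rfl
lemma pt_sub_apply (x y : Pt) (i : Fin 2) : (x - y) i = x i - y i := rfl
end
section
lemma norm_rot (β : ℝ) (v : Pt) : ‖rot β v‖ = ‖v‖ := by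
  have h : ‖rot β v‖ ^ 2 = ‖v‖ ^ 2 := by
    rw [norm_sq_pt, norm_sq_pt, rot_apply0, rot_apply1]
    have := Real.sin_sq_add_cos_sq β
    nlinarith [Real.sin_sq_add_cos_sq β]
  have h1 : (0:ℝ) ≤ ‖rot β v‖ := norm_nonneg _
  have h2 : (0:ℝ) ≤ ‖v‖ := norm_nonneg _
  nlinarith

def cross (x y : Pt) : ℝ := x 0 * y 1 - x 1 * y 0

lemma lagrange (x y : Pt) : (inner ℝ x y : ℝ) ^ 2 + cross x y ^ 2 = ‖x‖ ^ 2 * ‖y‖ ^ 2 := by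
  rw [inner_pt, norm_sq_pt, norm_sq_pt, cross]; ring

-- existence of rotation angle
lemma exists_rot {u v : Pt} (hu : ‖u‖ = 1) (hv : ‖v‖ = 1) :
    ∃ β : ℝ, rot β u = v ∧ |β| = Real.arccos (inner ℝ u v : ℝ) := by
  set p : ℝ := (inner ℝ u v : ℝ) with hp
  set q : ℝ := cross u v with hq
  have hpq : p ^ 2 + q ^ 2 = 1 := by rw [hp, hq]; rw [lagrange u v, hu, hv]; ring
  have hp1 : -1 ≤ p ∧ p ≤ 1 := by constructor <;> nlinarith [sq_nonneg q]
  have hcos : Real.cos (Real.arccos p) = p := Real.cos_arccos hp1.1 hp1.2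
  have hsin : Real.sin (Real.arccos p) = Real.sqrt (1 - p ^ 2) := Real.sin_arccos p
  have hsq : (1 : ℝ) - p ^ 2 = q ^ 2 := by linarith
  have habs : Real.sqrt (1 - p ^ 2) = |q| := by rw [hsq, Real.sqrt_sq_eq_abs]
  have hu2 : u 0 ^ 2 + u 1 ^ 2 = 1 := by rw [← norm_sq_pt, hu]; norm_num
  rcases le_or_gt 0 q with hq0 | hq0
  · refine ⟨Real.arccos p, ?_, abs_of_nonneg (Real.arccos_nonneg p)⟩
    apply Pt.ext2
    · rw [rot_apply0, hcos, hsin, habs, abs_of_nonneg hq0, hp, hq, inner_pt, cross]; linear_combination (v 0) * hu2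
    · rw [rot_apply1, hcos, hsin, habs, abs_of_nonneg hq0, hp, hq, inner_pt, cross]; linear_combination (v 1) * hu2
  · refine ⟨-Real.arccos p, ?_, by rw [abs_neg, abs_of_nonneg (Real.arccos_nonneg p)]⟩
    apply Pt.ext2
    · rw [rot_apply0, Real.cos_neg, Real.sin_neg, hcos, hsin, habs, abs_of_neg hq0, hp, hq,
        inner_pt, cross]; linear_combination (v 0) * hu2
    · rw [rot_apply1, Real.cos_neg, Real.sin_neg, hcos, hsin, habs, abs_of_neg hq0, hp, hq,
        inner_pt, cross]; linear_combination (v 1) * hu2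
end
section
lemma mem_subimg {B : Set Pt} {x y : Pt} : y ∈ (fun a => a - x) '' B ↔ y + x ∈ B := by
  constructor
  · rintro ⟨a, ha, rfl⟩; simpa using ha
  · intro h; exact ⟨y + x, h, by simp⟩

lemma mem_Hminus {u x : Pt} : x ∈ Hminus u ↔ (inner ℝ x u : ℝ) ≤ 0 := Iff.rfl

lemma mem_shiftSet {v : Pt} {S : Set Pt} {x : Pt} : x ∈ shiftSet v S ↔ x - v ∈ S := by
  constructor
  · rintro ⟨a, ha, rfl⟩; simpa using ha
  · intro h; exact ⟨x - v, h, by simp⟩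

def Sset (c : CA) (v : Pt) (t : ℝ) : Set Pt := {y | y ∈ c.N ∧ (inner ℝ y v : ℝ) ≤ -t}

lemma inner_self_one {v : Pt} (hv : ‖v‖ = 1) : (inner ℝ v v : ℝ) = 1 := by
  rw [real_inner_self_eq_norm_sq, hv]; norm_num

lemma lemA (c : CA) {w : Pt → ℝ} (hw : IsSpeed c w) {v : Pt} (hv : ‖v‖ = 1)
    {t : ℝ} (ht : t ≤ w v) : c.rule (Sset c v t) := by
  have hx : (t • v) ∈ c.Tbar (Hminus v) := by
    rw [hw v hv, mem_shiftSet, mem_Hminus]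
    rw [inner_sub_left, real_inner_smul_left, real_inner_smul_left, inner_self_one hv]
    linarith
  refine c.mono ?_ hx
  rintro y ⟨⟨hyB, -⟩, hyN⟩
  rw [mem_subimg, mem_Hminus, inner_add_left, real_inner_smul_left, inner_self_one hv] at hyB
  exact ⟨hyN, by linarith⟩

lemma lemB (c : CA) {w : Pt → ℝ} (hw : IsSpeed c w) {v : Pt} (hv : ‖v‖ = 1)
    {t : ℝ} (ht : w v < t) : ¬ c.rule (Sset c v t) := by
  have hx : (t • v) ∉ c.Tbar (Hminus v) := by
    rw [hw v hv, mem_shiftSet, mem_Hminus, inner_sub_left, real_inner_smul_left,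
      real_inner_smul_left, inner_self_one hv]
    intro h; simp only [mul_one] at h; linarith
  intro hr
  apply hx
  refine c.mono ?_ hr
  rintro y ⟨hyN, hyv⟩
  refine ⟨⟨?_, c.subLat hyN⟩, hyN⟩
  rw [mem_subimg, mem_Hminus, inner_add_left, real_inner_smul_left, inner_self_one hv]
  linarith

lemma lemAB (c : CA) {w : Pt → ℝ} (hw : IsSpeed c w) {v : Pt} (hv : ‖v‖ = 1) {t : ℝ} :
    c.rule (Sset c v t) ↔ t ≤ w v := by
  constructor
  · intro h; by_contra hc; exact lemB c hw hv (lt_of_not_ge hc) h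
  · exact lemA c hw hv

lemma exists_R (c : CA) : ∃ R : ℝ, 1 ≤ R ∧ ∀ y ∈ c.N, ‖y‖ ≤ R := by
  obtain ⟨R0, hR0⟩ := (c.finite.isBounded).subset_closedBall 0
  exact ⟨max R0 1, le_max_right _ _, fun y hy => by
    have := hR0 hy; simp [Metric.mem_closedBall] at this
    exact le_trans (by simpa using this) (le_max_left _ _)⟩

lemma lip (c : CA) {w : Pt → ℝ} (hw : IsSpeed c w) {R : ℝ} (hR : ∀ y ∈ c.N, ‖y‖ ≤ R)
    {u v : Pt} (hu : ‖u‖ = 1) (hv : ‖v‖ = 1) : w u - R * ‖v - u‖ ≤ w v := by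
  rw [← lemAB c hw hv]
  refine c.mono ?_ (lemA c hw hu le_rfl)
  rintro y ⟨hyN, hyu⟩
  refine ⟨hyN, ?_⟩
  have h1 : (inner ℝ y v : ℝ) = (inner ℝ y u : ℝ) + (inner ℝ y (v - u) : ℝ) := by
    rw [inner_sub_right]; ring
  have h2 : (inner ℝ y (v - u) : ℝ) ≤ ‖y‖ * ‖v - u‖ := real_inner_le_norm y (v - u)
  have h3 : ‖y‖ * ‖v - u‖ ≤ R * ‖v - u‖ :=
    mul_le_mul_of_nonneg_right (hR y hyN) (norm_nonneg _)
  linarith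

lemma thr (c : CA) {w : Pt → ℝ} (hw : IsSpeed c w) {v : Pt} (hv : ‖v‖ = 1) :
    ∃ y ∈ c.N, (inner ℝ y v : ℝ) = -(w v) := by
  classical
  have hrule := lemA c hw hv (le_refl (w v))
  have hne : (Sset c v (w v)).Nonempty := by
    rcases Set.eq_empty_or_nonempty (Sset c v (w v)) with h | h
    · rw [h] at hrule; exact absurd hrule c.notEmpty
    · exact h
  have hfin : (Sset c v (w v)).Finite := c.finite.subset (fun y hy => hy.1)
  obtain ⟨y₀, hy₀, hmax⟩ := Finset.exists_max_image hfin.toFinset (fun y => (inner ℝ y v : ℝ))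
    (by rwa [Set.Finite.toFinset_nonempty])
  rw [Set.Finite.mem_toFinset] at hy₀
  refine ⟨y₀, hy₀.1, le_antisymm ?_ ?_⟩
  · linarith [hy₀.2]
  · by_contra hc
    push_neg at hc
    have ht : w v < -(inner ℝ y₀ v : ℝ) := by linarith
    refine lemB c hw hv ht (c.mono ?_ hrule)
    rintro y hy
    refine ⟨hy.1, ?_⟩
    have := hmax y (Set.Finite.mem_toFinset hfin |>.mpr hy)
    linarith
end
section
lemma rot_zero (u : Pt) : rot 0 u = u := by
  apply Pt.ext2 <;> simp [rot_apply0, rot_apply1]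

lemma mem_lineu {w : Pt → ℝ} {u x : Pt} : x ∈ lineu w u ↔ (inner ℝ x u : ℝ) = -(w u) := Iff.rfl

lemma mem_farOpen {Nset : Set Pt} {q n x : Pt} :
    x ∈ farOpen Nset q n ↔ x ∈ Nset ∧ 0 < (inner ℝ (x - q) n : ℝ) * (inner ℝ q n : ℝ) := Iff.rfl

-- angle smallness from closeness
lemma angle_small (u : Pt) (hu : ‖u‖ = 1) {α : ℝ} (hα : 0 < α) :
    ∃ m : ℝ, 0 < m ∧ ∀ v : Pt, ‖v‖ = 1 → ‖v - u‖ < m → v ≠ u →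
      ∃ β : ℝ, β ≠ 0 ∧ |β| < α ∧ rot β u = v := by
  have hc : ContinuousAt Real.arccos 1 := Real.continuous_arccos.continuousAt
  rw [Metric.continuousAt_iff] at hc
  obtain ⟨ε, hε, hcont⟩ := hc α hα
  refine ⟨Real.sqrt ε, Real.sqrt_pos.mpr hε, fun v hv hvu hvne => ?_⟩
  obtain ⟨β, hβrot, hβabs⟩ := exists_rot hu hv
  have hβ0 : β ≠ 0 := by
    intro h; rw [h, rot_zero] at hβrot; exact hvne hβrot.symm
  refine ⟨β, hβ0, ?_, hβrot⟩
  have hnsq : ‖v - u‖ ^ 2 = 2 - 2 * (inner ℝ u v : ℝ) := by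
    rw [@norm_sub_sq_real, hu, hv, real_inner_comm]; ring
  have h1 : ‖v - u‖ ^ 2 < ε := by
    have := Real.sq_sqrt hε.le
    nlinarith [norm_nonneg (v - u), Real.sqrt_nonneg ε]
  have hdist : dist (inner ℝ u v : ℝ) 1 < ε := by
    rw [Real.dist_eq, abs_of_nonpos (by nlinarith [norm_nonneg (v-u), sq_nonneg ‖v-u‖] : (inner ℝ u v : ℝ) - 1 ≤ 0)]
    nlinarith
  have := hcont hdist
  rw [Real.dist_eq, Real.arccos_one, sub_zero] at this
  calc |β| = Real.arccos (inner ℝ u v : ℝ) := hβabs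
    _ ≤ |Real.arccos (inner ℝ u v : ℝ)| := le_abs_self _
    _ < α := this

lemma key1 (c : CA) (w : Pt → ℝ) (hw : IsSpeed c w) (hsc : Supercritical w)
    (u : Pt) (hu : ‖u‖ = 1) (xu : Pt) (hxu : xu ∈ lineu w u ∩ c.N)
    (α : ℝ) (hα : 0 < α)
    (hrot : ∀ β : ℝ, β ≠ 0 → |β| < α → ¬ c.rule (farOpen c.N xu (rot β u))) :
    ∃ βb : ℝ, 0 < βb ∧ ∀ v : Pt, ‖v‖ = 1 → ‖v - u‖ < βb →
      c.Tbar (Hminus u ∪ Hminus v) ⊆ (fun x => x - xu) '' (Hminus u ∪ Hminus v) := by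
  classical
  obtain ⟨hxuline, hxuN⟩ := hxu
  rw [mem_lineu] at hxuline
  have hwu : 0 < w u := hsc u hu
  set F : Finset Pt := c.finite.toFinset with hF
  have hFne : F.Nonempty := ⟨0, by rw [hF, Set.Finite.mem_toFinset]; exact c.zeroMem⟩
  set f : Pt → ℝ := fun y =>
    if (inner ℝ (y - xu) u : ℝ) < 0 then (-(inner ℝ (y - xu) u : ℝ)) / (‖y - xu‖ + 1) else 1
    with hf
  set m₁ : ℝ := F.inf' hFne f with hm₁
  have hm₁pos : 0 < m₁ := by
    rw [hm₁, Finset.lt_inf'_iff]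
    intro y _
    rw [hf]
    dsimp only
    split_ifs with h
    · exact div_pos (by linarith) (by positivity)
    · norm_num
  set m₂ : ℝ := w u / (‖xu‖ + 1) with hm₂
  have hm₂pos : 0 < m₂ := div_pos hwu (by positivity)
  obtain ⟨m₃, hm₃pos, hm₃⟩ := angle_small u hu hα
  refine ⟨min m₁ (min m₂ m₃), by positivity, fun v hv hvu => ?_⟩
  have hvu₁ : ‖v - u‖ < m₁ := lt_of_lt_of_le hvu (min_le_left _ _)
  have hvu₂ : ‖v - u‖ < m₂ := lt_of_lt_of_le hvu ((min_le_right _ _).trans (min_le_left _ _))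
  have hvu₃ : ‖v - u‖ < m₃ := lt_of_lt_of_le hvu ((min_le_right _ _).trans (min_le_right _ _))
  -- (P2)
  have hP2 : (inner ℝ xu v : ℝ) < 0 := by
    have h1 : (inner ℝ xu v : ℝ) = (inner ℝ xu u : ℝ) + (inner ℝ xu (v - u) : ℝ) := by
      rw [inner_sub_right]; ring
    have h2 : (inner ℝ xu (v - u) : ℝ) ≤ ‖xu‖ * ‖v - u‖ := real_inner_le_norm _ _
    have h3 : ‖xu‖ * ‖v - u‖ ≤ (‖xu‖ + 1) * ‖v - u‖ :=
      mul_le_mul_of_nonneg_right (by linarith) (norm_nonneg _)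
    have h4 : (‖xu‖ + 1) * ‖v - u‖ < (‖xu‖ + 1) * m₂ :=
      mul_lt_mul_of_pos_left hvu₂ (by positivity)
    have h5 : (‖xu‖ + 1) * m₂ = w u := by
      rw [hm₂]; field_simp
    rw [h1, hxuline]; linarith
  -- (P1)
  have hP1 : ∀ y ∈ c.N, (inner ℝ (y - xu) u : ℝ) < 0 → (inner ℝ (y - xu) v : ℝ) < 0 := by
    intro y hyN hyu
    have hym : m₁ ≤ f y := Finset.inf'_le f (by rw [hF, Set.Finite.mem_toFinset]; exact hyN)
    rw [hf] at hym
    simp only [if_pos hyu] at hym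
    have h1 : (inner ℝ (y - xu) v : ℝ) = (inner ℝ (y - xu) u : ℝ) + (inner ℝ (y - xu) (v - u) : ℝ) := by
      rw [inner_sub_right]; ring
    have h2 : (inner ℝ (y - xu) (v - u) : ℝ) ≤ ‖y - xu‖ * ‖v - u‖ := real_inner_le_norm _ _
    have h3 : ‖y - xu‖ * ‖v - u‖ ≤ (‖y - xu‖ + 1) * ‖v - u‖ :=
      mul_le_mul_of_nonneg_right (by linarith) (norm_nonneg _)
    have h4 : (‖y - xu‖ + 1) * ‖v - u‖ < (‖y - xu‖ + 1) * (-(inner ℝ (y - xu) u : ℝ) / (‖y - xu‖ + 1)) := by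
      refine mul_lt_mul_of_pos_left (lt_of_lt_of_le hvu₁ hym) (by positivity)
    have h5 : (‖y - xu‖ + 1) * (-(inner ℝ (y - xu) u : ℝ) / (‖y - xu‖ + 1)) = -(inner ℝ (y - xu) u : ℝ) := by
      field_simp
    rw [h1]; linarith
  -- main
  rcases eq_or_ne v u with rfl | hvne
  · rw [Set.union_self]
    intro x hx
    rw [hw v hv] at hx
    rw [mem_shiftSet, mem_Hminus, inner_sub_left, real_inner_smul_left, inner_self_one hv] at hx
    rw [mem_subimg, mem_Hminus, inner_add_left, hxuline]
    linarith
  · obtain ⟨β, hβ0, hβα, hβrot⟩ := hm₃ v hv hvu₃ hvne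
    intro x hx
    rw [mem_subimg]
    by_contra hq
    simp only [Set.mem_union, mem_Hminus, not_or, not_le] at hq
    obtain ⟨hq1, hq2⟩ := hq
    rw [inner_add_left] at hq1 hq2
    refine hrot β hβ0 hβα ?_
    rw [hβrot]
    refine c.mono ?_ hx
    rintro y ⟨⟨hyB, -⟩, hyN⟩
    rw [mem_subimg] at hyB
    refine ⟨hyN, ?_⟩
    have hyv : (inner ℝ (y - xu) v : ℝ) < 0 := by
      rcases hyB with hyB | hyB
      · rw [mem_Hminus, inner_add_left] at hyB
        refine hP1 y hyN ?_
        rw [inner_sub_left, hxuline]; linarith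
      · rw [mem_Hminus, inner_add_left] at hyB
        rw [inner_sub_left]; linarith
    exact mul_pos_of_neg_of_neg hyv hP2
end
section
lemma mem_frontier_K (w : Pt → ℝ) {v : Pt} (hv : ‖v‖ = 1) (hwv : 0 < w v) :
    (w v)⁻¹ • v ∈ frontier (Kset w) := by
  have hK : (w v)⁻¹ • v ∈ Kset w := ⟨v, hv, (w v)⁻¹, by positivity, le_rfl, rfl⟩
  constructor
  · exact subset_closure hK
  · intro hint
    rw [mem_interior_iff_mem_nhds, Metric.mem_nhds_iff] at hint
    obtain ⟨ε, hε, hball⟩ := hint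
    have hx' : ((w v)⁻¹ • v + (ε/2) • v) ∈ Kset w := by
      apply hball
      rw [Metric.mem_ball, dist_eq_norm]
      have : (w v)⁻¹ • v + (ε/2) • v - (w v)⁻¹ • v = (ε/2) • v := by abel
      rw [this, norm_smul, hv, Real.norm_eq_abs, abs_of_pos (by linarith)]
      linarith
    obtain ⟨u', hu', r', hr0, hrle, hx'eq⟩ := hx'
    have hsum : (w v)⁻¹ • v + (ε/2) • v = ((w v)⁻¹ + ε/2) • v := by
      rw [add_smul]
    have hs : (0:ℝ) < (w v)⁻¹ + ε/2 := by positivity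
    have hnorm : r' = (w v)⁻¹ + ε/2 := by
      have h1 : ‖r' • u'‖ = r' := by
        rw [norm_smul, hu', Real.norm_eq_abs, abs_of_nonneg hr0]; ring
      have h2 : ‖((w v)⁻¹ + ε/2) • v‖ = (w v)⁻¹ + ε/2 := by
        rw [norm_smul, hv, Real.norm_eq_abs, abs_of_pos hs]; ring
      rw [← hx'eq, hsum, h2] at h1; linarith [h1]
    have hu'v : u' = v := by
      have h1 : r' • u' = r' • v := by rw [← hx'eq, hsum, hnorm]
      have h2 := congrArg (fun z => (r')⁻¹ • z) h1
      simpa [smul_smul, inv_mul_cancel₀ (by rw [hnorm]; positivity : r' ≠ 0)] using h2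
    rw [hu'v, hnorm] at hrle
    linarith

lemma norm_rot_sub {u : Pt} (hu : ‖u‖ = 1) (θ : ℝ) :
    ‖rot θ u - u‖ ^ 2 = 2 - 2 * Real.cos θ := by
  have hu2 : u 0 ^ 2 + u 1 ^ 2 = 1 := by rw [← norm_sq_pt, hu]; norm_num
  rw [norm_sq_pt, pt_sub_apply, pt_sub_apply, rot_apply0, rot_apply1]
  nlinarith [Real.sin_sq_add_cos_sq θ]

lemma norm_rot_sub_le {u : Pt} (hu : ‖u‖ = 1) (θ : ℝ) : ‖rot θ u - u‖ ≤ |θ| := by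
  have h1 := norm_rot_sub hu θ
  have h2 : 1 - θ ^ 2 / 2 ≤ Real.cos θ := Real.one_sub_sq_div_two_le_cos
  have h3 : ‖rot θ u - u‖ ^ 2 ≤ |θ| ^ 2 := by rw [sq_abs]; nlinarith
  nlinarith [norm_nonneg (rot θ u - u), abs_nonneg θ, sq_nonneg (‖rot θ u - u‖ - |θ|), sq_nonneg (‖rot θ u - u‖ + |θ|)]

lemma orth2 {a b y : Pt} (hc : cross a b ≠ 0) (h1 : (inner ℝ a y : ℝ) = 0)
    (h2 : (inner ℝ b y : ℝ) = 0) : y = 0 := by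
  rw [inner_pt] at h1 h2
  rw [cross] at hc
  apply Pt.ext2
  · have h : y 0 * (a 0 * b 1 - a 1 * b 0) = 0 := by linear_combination b 1 * h1 - a 1 * h2
    show y 0 = (0:Pt) 0
    have h0 : (0:Pt) 0 = 0 := rfl
    rw [h0]
    exact (mul_eq_zero.mp h).resolve_right hc
  · have h : y 1 * (a 0 * b 1 - a 1 * b 0) = 0 := by linear_combination a 0 * h2 - b 0 * h1
    show y 1 = (0:Pt) 1
    have h0 : (0:Pt) 1 = 0 := rfl
    rw [h0]
    exact (mul_eq_zero.mp h).resolve_right hc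
end
section
def uperp (u : Pt) : Pt := mkPt (-(u 1)) (u 0)

def vfam (u : Pt) (t : ℝ) : Pt := (Real.sqrt (1 + t^2))⁻¹ • (u + t • uperp u)

lemma pt_smul_apply (s : ℝ) (x : Pt) (i : Fin 2) : (s • x) i = s * x i := rfl

lemma vfam_apply0 (u : Pt) (t : ℝ) :
    vfam u t 0 = (Real.sqrt (1 + t^2))⁻¹ * (u 0 - t * u 1) := by
  show (Real.sqrt (1 + t^2))⁻¹ * ((u + t • uperp u) 0) = _
  rw [pt_add_apply, pt_smul_apply]
  show (Real.sqrt (1 + t^2))⁻¹ * (u 0 + t * (-(u 1))) = _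
  ring

lemma vfam_apply1 (u : Pt) (t : ℝ) :
    vfam u t 1 = (Real.sqrt (1 + t^2))⁻¹ * (u 1 + t * u 0) := by
  show (Real.sqrt (1 + t^2))⁻¹ * ((u + t • uperp u) 1) = _
  rw [pt_add_apply, pt_smul_apply]
  rfl

lemma sqrt_facts (t : ℝ) : 1 ≤ Real.sqrt (1 + t^2) ∧ Real.sqrt (1 + t^2) ^ 2 = 1 + t^2 := by
  constructor
  · nlinarith [Real.sq_sqrt (by positivity : (0:ℝ) ≤ 1 + t^2), Real.sqrt_nonneg (1 + t^2), sq_nonneg t, sq_nonneg (Real.sqrt (1+t^2) - 1)]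
  · exact Real.sq_sqrt (by positivity)

lemma norm_vfam {u : Pt} (hu : ‖u‖ = 1) (t : ℝ) : ‖vfam u t‖ = 1 := by
  obtain ⟨hS1, hS2⟩ := sqrt_facts t
  have hu2 : u 0 ^ 2 + u 1 ^ 2 = 1 := by rw [← norm_sq_pt, hu]; norm_num
  have hsq : ‖vfam u t‖ ^ 2 = 1 := by
    rw [norm_sq_pt, vfam_apply0, vfam_apply1]
    field_simp
    nlinarith
  nlinarith [norm_nonneg (vfam u t)]

lemma cross_vfam {u : Pt} (hu : ‖u‖ = 1) (s t : ℝ) :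
    cross (vfam u s) (vfam u t) =
      (Real.sqrt (1 + s^2))⁻¹ * (Real.sqrt (1 + t^2))⁻¹ * (t - s) := by
  have hu2 : u 0 ^ 2 + u 1 ^ 2 = 1 := by rw [← norm_sq_pt, hu]; norm_num
  rw [cross, vfam_apply0, vfam_apply1, vfam_apply0, vfam_apply1]
  linear_combination ((Real.sqrt (1 + s^2))⁻¹ * (Real.sqrt (1 + t^2))⁻¹ * (t - s)) * hu2

lemma cross_vfam_ne {u : Pt} (hu : ‖u‖ = 1) {s t : ℝ} (hst : s ≠ t) :
    cross (vfam u s) (vfam u t) ≠ 0 := by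
  rw [cross_vfam hu]
  obtain ⟨hS1, -⟩ := sqrt_facts s
  obtain ⟨hT1, -⟩ := sqrt_facts t
  have : t - s ≠ 0 := sub_ne_zero.mpr (Ne.symm hst)
  positivity

lemma inner_u_vfam {u : Pt} (hu : ‖u‖ = 1) (t : ℝ) :
    (inner ℝ u (vfam u t) : ℝ) = (Real.sqrt (1 + t^2))⁻¹ := by
  have hu2 : u 0 ^ 2 + u 1 ^ 2 = 1 := by rw [← norm_sq_pt, hu]; norm_num
  rw [inner_pt, vfam_apply0, vfam_apply1]
  linear_combination (Real.sqrt (1 + t^2))⁻¹ * hu2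

lemma norm_vfam_sub_le {u : Pt} (hu : ‖u‖ = 1) {t : ℝ} (ht : |t| ≤ 1) :
    ‖vfam u t - u‖ ≤ |t| := by
  obtain ⟨hS1, hS2⟩ := sqrt_facts t
  have hS0 : 0 < Real.sqrt (1 + t^2) := by linarith
  have hsq : ‖vfam u t - u‖ ^ 2 = 2 - 2 * (Real.sqrt (1 + t^2))⁻¹ := by
    rw [@norm_sub_sq_real, norm_vfam hu, hu, real_inner_comm, inner_u_vfam hu]
    ring
  have ht2 : t ^ 2 ≤ 1 := by nlinarith [abs_nonneg t, sq_abs t]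
  have hSle : Real.sqrt (1 + t^2) ≤ 1 + t^2/2 := by nlinarith
  have hkey : ‖vfam u t - u‖ ^ 2 ≤ |t| ^ 2 := by
    rw [hsq, sq_abs]
    have h1 : (1:ℝ) - t^2/2 ≤ (Real.sqrt (1 + t^2))⁻¹ := by
      rw [inv_eq_one_div, le_div_iff₀ hS0]; nlinarith
    linarith
  nlinarith [norm_nonneg (vfam u t - u), abs_nonneg t,
    sq_nonneg (‖vfam u t - u‖ - |t|), sq_nonneg (‖vfam u t - u‖ + |t|)]
end
section
-- region lemma: in-region unit vectors have linear speed determined by the frontier line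
lemma region_eq (c : CA) (w : Pt → ℝ) (hw : IsSpeed c w) (hsc : Supercritical w)
    {u : Pt} (hu : ‖u‖ = 1) {R : ℝ} (hR1 : 1 ≤ R) (hR : ∀ y ∈ c.N, ‖y‖ ≤ R)
    {δ : ℝ} (hδ : 0 < δ) {n : Pt}
    (hline : frontier (Kset w) ∩ Metric.ball ((w u)⁻¹ • u) δ =
      lineSet ((w u)⁻¹ • u) n ∩ Metric.ball ((w u)⁻¹ • u) δ) :
    ∃ ρ : ℝ, 0 < ρ ∧ ∀ v : Pt, ‖v‖ = 1 → ‖v - u‖ < ρ →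
      (inner ℝ v n : ℝ) / (w v) = (inner ℝ u n : ℝ) / (w u) := by
  have hwu : 0 < w u := hsc u hu
  set C : ℝ := 2 * R / (w u)^2 + 1 / (w u) with hC
  have hCpos : 0 < C := by rw [hC]; positivity
  refine ⟨min (w u / (2 * R)) (δ / (C + 1)), lt_min (by positivity) (by positivity),
    fun v hv hvρ => ?_⟩
  have hwv : 0 < w v := hsc v hv
  have hvρ₁ : ‖v - u‖ < w u / (2 * R) := lt_of_lt_of_le hvρ (min_le_left _ _)
  have hvρ₂ : ‖v - u‖ < δ / (C + 1) := lt_of_lt_of_le hvρ (min_le_right _ _)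
  have hlow : w u / 2 ≤ w v := by
    have h1 := lip c hw hR hu hv
    have h2 : R * ‖v - u‖ < R * (w u / (2 * R)) :=
      mul_lt_mul_of_pos_left hvρ₁ (by linarith)
    have h3 : R * (w u / (2 * R)) = w u / 2 := by field_simp
    linarith
  have habs : |w v - w u| ≤ R * ‖v - u‖ := by
    rw [abs_le]
    constructor
    · have := lip c hw hR hu hv; linarith
    · have := lip c hw hR hv hu; rw [norm_sub_rev] at this; linarith
  -- distance bound
  have hdist : dist ((w v)⁻¹ • v) ((w u)⁻¹ • u) < δ := by
    rw [dist_eq_norm]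
    have e1 : (w v)⁻¹ • v - (w u)⁻¹ • u = ((w v)⁻¹ - (w u)⁻¹) • v + (w u)⁻¹ • (v - u) := by
      rw [sub_smul, smul_sub]; abel
    have e2 : ‖(w v)⁻¹ • v - (w u)⁻¹ • u‖ ≤ |(w v)⁻¹ - (w u)⁻¹| + (w u)⁻¹ * ‖v - u‖ := by
      rw [e1]
      refine le_trans (norm_add_le _ _) ?_
      rw [norm_smul, norm_smul, hv, Real.norm_eq_abs, Real.norm_eq_abs,
        abs_of_pos (by positivity : (0:ℝ) < (w u)⁻¹)]
      simp
    have e3 : |(w v)⁻¹ - (w u)⁻¹| ≤ 2 * R * ‖v - u‖ / (w u)^2 := by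
      rw [inv_sub_inv hwv.ne' hwu.ne', abs_div, abs_sub_comm, abs_of_pos (mul_pos hwv hwu)]
      have h4 : |w v - w u| / (w v * w u) ≤ (R * ‖v - u‖) / ((w u)^2 / 2) :=
        div_le_div₀ (by positivity) habs (by positivity) (by nlinarith)
      have h5 : (R * ‖v - u‖) / ((w u)^2 / 2) = 2 * R * ‖v - u‖ / (w u)^2 := by
        field_simp
      linarith
    have e4 : 2 * R * ‖v - u‖ / (w u)^2 + (w u)⁻¹ * ‖v - u‖ = C * ‖v - u‖ := by
      rw [hC]; field_simp
    have e5 : C * ‖v - u‖ < C * (δ / (C + 1)) :=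
      mul_lt_mul_of_pos_left hvρ₂ hCpos
    have e6 : C * (δ / (C + 1)) < δ := by
      rw [mul_div_assoc', div_lt_iff₀ (by positivity : (0:ℝ) < C + 1)]
      nlinarith
    linarith
  have hmem : (w v)⁻¹ • v ∈ lineSet ((w u)⁻¹ • u) n ∩ Metric.ball ((w u)⁻¹ • u) δ := by
    rw [← hline]
    exact ⟨mem_frontier_K w hv hwv, Metric.mem_ball.mpr hdist⟩
  have h0 : (inner ℝ ((w v)⁻¹ • v - (w u)⁻¹ • u) n : ℝ) = 0 := hmem.1
  rw [inner_sub_left, real_inner_smul_left, real_inner_smul_left] at h0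
  rw [div_eq_div_iff hwv.ne' hwu.ne']
  field_simp at h0
  rw [inner_pt v n, inner_pt u n]
  linear_combination h0 - w u * inner_pt v n + w v * inner_pt u n
end
section
lemma vfam_zero {u : Pt} (hu : ‖u‖ = 1) : vfam u 0 = u := by
  apply Pt.ext2
  · rw [vfam_apply0]; simp
  · rw [vfam_apply1]; simp

lemma exists_q (c : CA) (w : Pt → ℝ) (hw : IsSpeed c w) (hsc : Supercritical w)
    {u : Pt} (hu : ‖u‖ = 1) {n : Pt} (hn0 : n ≠ 0) {ρ : ℝ} (hρ : 0 < ρ)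
    (hreg : ∀ v : Pt, ‖v‖ = 1 → ‖v - u‖ < ρ →
      (inner ℝ v n : ℝ) / (w v) = (inner ℝ u n : ℝ) / (w u)) :
    ∃ q : Pt, q ∈ c.N ∧ (inner ℝ q u : ℝ) = -(w u) ∧
      ∀ v : Pt, ‖v‖ = 1 → ‖v - u‖ < ρ → w v = -(inner ℝ q v : ℝ) := by
  classical
  have hwu : 0 < w u := hsc u hu
  -- small parameters in region
  have hparam : ∀ t : ℝ, 0 < t → t ≤ min (ρ/2) (1/2) →
      ‖vfam u t‖ = 1 ∧ ‖vfam u t - u‖ < ρ := by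
    intro t ht0 ht1
    have h1 : |t| ≤ 1 := by
      rw [abs_of_pos ht0]
      exact le_trans ht1 (le_trans (min_le_right _ _) (by norm_num))
    refine ⟨norm_vfam hu t, lt_of_le_of_lt (norm_vfam_sub_le hu h1) ?_⟩
    rw [abs_of_pos ht0]
    exact lt_of_le_of_lt (le_trans ht1 (min_le_left _ _)) (by linarith)
  have hun0 : (inner ℝ u n : ℝ) ≠ 0 := by
    intro h0
    set t : ℝ := min (ρ/2) (1/2) with htdef
    have ht0 : 0 < t := lt_min (by linarith) (by norm_num)
    obtain ⟨hv1, hv2⟩ := hparam t ht0 le_rfl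
    have hz := hreg (vfam u t) hv1 hv2
    rw [h0, zero_div, div_eq_zero_iff] at hz
    have hz' : (inner ℝ (vfam u t) n : ℝ) = 0 := hz.resolve_right (hsc _ hv1).ne'
    have hcr : cross (vfam u 0) (vfam u t) ≠ 0 := cross_vfam_ne hu ht0.ne
    have h0' : (inner ℝ (vfam u 0) n : ℝ) = 0 := by rw [vfam_zero hu]; exact h0
    exact hn0 (orth2 hcr h0' hz')
  refine ⟨-(w u / (inner ℝ u n : ℝ)) • n, ?_, ?_, ?_⟩
  rotate_left
  · rw [real_inner_smul_left, real_inner_comm u n, neg_mul, div_mul_cancel₀ _ hun0]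
  · intro v hv hvρ
    have hwv : 0 < w v := hsc v hv
    have hcross := (div_eq_div_iff hwv.ne' hwu.ne').mp (hreg v hv hvρ)
    rw [real_inner_smul_left, real_inner_comm v n, neg_mul, neg_neg, div_mul_eq_mul_div,
      eq_div_iff hun0]
    linear_combination -hcross
  · -- q ∈ c.N by pigeonhole
    set q : Pt := -(w u / (inner ℝ u n : ℝ)) • n with hq
    show q ∈ c.N
    have hqspeed : ∀ v : Pt, ‖v‖ = 1 → ‖v - u‖ < ρ → w v = -(inner ℝ q v : ℝ) := by
      intro v hv hvρ
      have hwv : 0 < w v := hsc v hv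
      have hcross := (div_eq_div_iff hwv.ne' hwu.ne').mp (hreg v hv hvρ)
      rw [hq, real_inner_smul_left, real_inner_comm v n, neg_mul, neg_neg, div_mul_eq_mul_div,
        eq_div_iff hun0]
      linear_combination -hcross
    set F : Finset Pt := c.finite.toFinset with hF
    set k : ℕ := F.card with hk
    set θ : ℝ := min (ρ/2) (1/2) with hθ
    have hθ0 : 0 < θ := lt_min (by linarith) (by norm_num)
    set tf : Fin (k+1) → ℝ := fun i => θ / (i + 1 : ℝ) with htf
    have htf0 : ∀ i, 0 < tf i ∧ tf i ≤ θ := by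
      intro i
      have hi : (0:ℝ) < (i:ℝ) + 1 := by positivity
      constructor
      · exact div_pos hθ0 hi
      · rw [htf]
        refine div_le_self hθ0.le ?_
        have := Nat.cast_nonneg (α := ℝ) (i : ℕ)
        push_cast
        linarith
    have hvi : ∀ i : Fin (k+1), ‖vfam u (tf i)‖ = 1 ∧ ‖vfam u (tf i) - u‖ < ρ :=
      fun i => hparam _ (htf0 i).1 (htf0 i).2
    have hex : ∀ i : Fin (k+1), ∃ y ∈ c.N, (inner ℝ (vfam u (tf i)) (y - q) : ℝ) = 0 := by
      intro i
      obtain ⟨y, hyN, hyi⟩ := thr c hw (hvi i).1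
      refine ⟨y, hyN, ?_⟩
      have e1 := real_inner_comm y (vfam u (tf i))
      have e2 := real_inner_comm q (vfam u (tf i))
      rw [inner_sub_right, e1, e2, hyi]
      linarith [hqspeed _ (hvi i).1 (hvi i).2]
    choose Y hYN hY using hex
    have hcard : Fintype.card {y // y ∈ F} < Fintype.card (Fin (k+1)) := by
      rw [Fintype.card_coe, Fintype.card_fin]; omega
    obtain ⟨i, j, hij, hYij⟩ := Fintype.exists_ne_map_eq_of_card_lt
      (fun i : Fin (k+1) => (⟨Y i, by rw [hF, Set.Finite.mem_toFinset]; exact hYN i⟩ : {y // y ∈ F}))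
      hcard
    have hYeq : Y i = Y j := congrArg Subtype.val hYij
    have htfne : tf i ≠ tf j := by
      intro h
      apply hij
      rw [htf] at h
      have hi : ((i:ℝ) + 1) ≠ 0 := by positivity
      have hj : ((j:ℝ) + 1) ≠ 0 := by positivity
      field_simp at h
      exact Fin.ext (by exact_mod_cast (by linarith : ((i:ℕ):ℝ) = (j:ℕ)))
    have hcr : cross (vfam u (tf i)) (vfam u (tf j)) ≠ 0 := cross_vfam_ne hu htfne
    have := orth2 hcr (hY i) (by rw [hYeq]; exact hY j)
    have hq' : q = Y i := (sub_eq_zero.mp this).symm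
    rw [hq']
    exact hYN i
end
section
lemma q_rot (c : CA) {w : Pt → ℝ} (hw : IsSpeed c w) (hsc : Supercritical w)
    {u q : Pt} (hu : ‖u‖ = 1) {ρ : ℝ}
    (hspeed : ∀ v : Pt, ‖v‖ = 1 → ‖v - u‖ < ρ → w v = -(inner ℝ q v : ℝ)) :
    ∀ β : ℝ, |β| < ρ → ¬ c.rule (farOpen c.N q (rot β u)) := by
  intro β hβρ hrule
  set m := rot β u with hmdef
  have hm1 : ‖m‖ = 1 := by rw [hmdef, norm_rot]; exact hu
  have hmρ : ‖m - u‖ < ρ := lt_of_le_of_lt (norm_rot_sub_le hu β) hβρ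
  have hwm : 0 < w m := hsc m hm1
  have hqm : (inner ℝ q m : ℝ) = -(w m) := by have := hspeed m hm1 hmρ; linarith
  have hne : (farOpen c.N q m).Nonempty := by
    rcases Set.eq_empty_or_nonempty (farOpen c.N q m) with h | h
    · rw [h] at hrule; exact absurd hrule c.notEmpty
    · exact h
  have hfin : (farOpen c.N q m).Finite := c.finite.subset (fun y hy => hy.1)
  obtain ⟨y₀, hy₀, hmax⟩ := Finset.exists_max_image hfin.toFinset (fun y => (inner ℝ y m : ℝ))
    (by rwa [Set.Finite.toFinset_nonempty])
  rw [Set.Finite.mem_toFinset] at hy₀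
  have hlt : ∀ y ∈ farOpen c.N q m, (inner ℝ y m : ℝ) < inner ℝ q m := by
    rintro y ⟨hyN, hyp⟩
    have hqm0 : (inner ℝ q m : ℝ) < 0 := by rw [hqm]; linarith
    rw [inner_sub_left] at hyp
    nlinarith
  have hy₀lt := hlt y₀ hy₀
  have hwlt : w m < -(inner ℝ y₀ m : ℝ) := by rw [hqm] at hy₀lt; linarith
  refine lemB c hw hm1 hwlt (c.mono ?_ hrule)
  intro y hy
  refine ⟨hy.1, ?_⟩
  have h1 := hmax y (Set.Finite.mem_toFinset hfin |>.mpr hy)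
  simp only [neg_neg]
  linarith
end
theorem stmt13 (c : CA) (w : Pt → ℝ) (hw : IsSpeed c w) (hsc : Supercritical w)
    (u : Pt) (hu : ‖u‖ = 1) (xu : Pt) (hxu : xu ∈ lineu w u ∩ c.N)
    (α : ℝ) (hα : 0 < α)
    (hrot : ∀ β : ℝ, β ≠ 0 → |β| < α → ¬ c.rule (farOpen c.N xu (rot β u))) :
    (∃ βb : ℝ, 0 < βb ∧ ∀ v : Pt, ‖v‖ = 1 → ‖v - u‖ < βb →
        c.Tbar (Hminus u ∪ Hminus v) ⊆ (fun x => x - xu) '' (Hminus u ∪ Hminus v)) ∧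
    ((∃ δ : ℝ, 0 < δ ∧ ∃ n : Pt, n ≠ 0 ∧
        frontier (Kset w) ∩ Metric.ball ((w u)⁻¹ • u) δ =
          lineSet ((w u)⁻¹ • u) n ∩ Metric.ball ((w u)⁻¹ • u) δ) →
      (∀ x' : Pt, x' ∈ lineu w u ∩ c.N →
        (∃ α' : ℝ, 0 < α' ∧ ∀ β : ℝ, β ≠ 0 → |β| < α' →
          ¬ c.rule (farOpen c.N x' (rot β u))) → x' = xu) →
      ∃ βb : ℝ, 0 < βb ∧ ∀ v : Pt, ‖v‖ = 1 → ‖v - u‖ < βb →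
        c.Tbar (Hminus u ∪ Hminus v) = (fun x => x - xu) '' (Hminus u ∪ Hminus v)) := by
  obtain ⟨hxuline, hxuN⟩ := hxu
  rw [mem_lineu] at hxuline
  have hwu : 0 < w u := hsc u hu
  constructor
  · exact key1 c w hw hsc u hu xu ⟨hxuline, hxuN⟩ α hα hrot
  · rintro ⟨δ, hδ, n, hn0, hline⟩ huniq
    obtain ⟨βb₁, hβb₁, hkey1⟩ := key1 c w hw hsc u hu xu ⟨hxuline, hxuN⟩ α hα hrot
    obtain ⟨R, hR1, hR⟩ := exists_R c
    obtain ⟨ρ, hρpos, hreg⟩ := region_eq c w hw hsc hu hR1 hR hδ hline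
    obtain ⟨q, hqN, hqline, hqspeed⟩ := exists_q c w hw hsc hu hn0 hρpos hreg
    have hquniq : q = xu :=
      huniq q ⟨mem_lineu.mpr hqline, hqN⟩
        ⟨ρ, hρpos, fun β _ hβρ => q_rot c hw hsc hu hqspeed β hβρ⟩
    subst hquniq
    refine ⟨min βb₁ ρ, lt_min hβb₁ hρpos, fun v hv hvm => ?_⟩
    have hv₁ : ‖v - u‖ < βb₁ := lt_of_lt_of_le hvm (min_le_left _ _)
    have hv₂ : ‖v - u‖ < ρ := lt_of_lt_of_le hvm (min_le_right _ _)
    refine Set.Subset.antisymm (hkey1 v hv hv₁) ?_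
    intro x hx
    rw [mem_subimg] at hx
    show c.rule _
    rcases hx with hx | hx
    · refine c.mono ?_ (lemA c hw hu (le_refl (w u)))
      rintro y ⟨hyN, hyu⟩
      refine ⟨⟨mem_subimg.mpr (Or.inl ?_), c.subLat hyN⟩, hyN⟩
      rw [mem_Hminus] at hx ⊢
      rw [inner_add_left] at hx ⊢
      rw [hxuline] at hx
      linarith
    · have hwveq : w v = -(inner ℝ q v : ℝ) := hqspeed v hv hv₂
      refine c.mono ?_ (lemA c hw hv (le_of_eq hwveq.symm))
      rintro y ⟨hyN, hyv⟩
      refine ⟨⟨mem_subimg.mpr (Or.inr ?_), c.subLat hyN⟩, hyN⟩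
      rw [mem_Hminus] at hx ⊢
      rw [inner_add_left] at hx ⊢
      linarith

end
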